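/- For distinct square-free positive integers s₁, ..., sₘ and integers c₁, ..., cₘ not all zero, the sum ∑ᵢ cᵢ√sᵢ is nonzero. -/

import Mathlib

open Real Finset

noncomputable def KF (P : Finset ℕ) : IntermediateField ℚ ℝ :=
  IntermediateField.adjoin ℚ ((fun p : ℕ => Real.sqrt p) '' P)

lemma ratCast_mem_KF (P : Finset ℕ) (q : ℚ) : (q : ℝ) ∈ KF P := by
  have : (q : ℝ) = algebraMap ℚ ℝ q := rfl
  rw [this]; exact IntermediateField.algebraMap_mem _ _

lemma sqrt_prod_eq (Q : Finset ℕ) : Real.sqrt (∏ q ∈ Q, (q : ℝ)) = ∏ q ∈ Q, Real.sqrt (q : ℝ) := by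
  induction Q using Finset.induction_on with
  | empty => simp
  | insert _ _ h ih =>
    rw [Finset.prod_insert h, Finset.prod_insert h, Real.sqrt_mul (by positivity), ih]

lemma sqrt_prod_mem {P T : Finset ℕ} (hTP : T ⊆ P) :
    Real.sqrt (∏ t ∈ T, (t : ℝ)) ∈ KF P := by
  rw [sqrt_prod_eq]
  refine prod_mem ?_
  intro t ht
  exact IntermediateField.subset_adjoin ℚ _ ⟨t, hTP ht, rfl⟩

lemma squarefree_prod_primes {Q : Finset ℕ} (hQ : ∀ q ∈ Q, q.Prime) :
    Squarefree (∏ q ∈ Q, q) := by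
  induction Q using Finset.induction_on with
  | empty => simp only [Finset.prod_empty]; exact squarefree_one
  | @insert p Q hp ih =>
    rw [Finset.prod_insert hp]
    have hpp := hQ p (Finset.mem_insert_self p Q)
    have hQ' : ∀ q ∈ Q, q.Prime := fun q hq => hQ q (Finset.mem_insert_of_mem hq)
    rw [Nat.squarefree_mul_iff]
    refine ⟨?_, hpp.squarefree, ih hQ'⟩
    refine Nat.Coprime.prod_right fun q hq => ?_
    exact (Nat.coprime_primes hpp (hQ' q hq)).mpr (fun h => hp (h ▸ hq))

lemma sqrt_prod_not_mem (P : Finset ℕ) (hP : ∀ p ∈ P, p.Prime) :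
    ∀ Q : Finset ℕ, (∀ q ∈ Q, q.Prime) → Disjoint P Q → Q.Nonempty →
      Real.sqrt (∏ q ∈ Q, (q : ℝ)) ∉ KF P := by
  induction P using Finset.induction_on with
  | empty =>
    intro Q hQ _ hne hmem
    have hcast : (∏ q ∈ Q, (q : ℝ)) = ((∏ q ∈ Q, q : ℕ) : ℝ) := by push_cast; ring
    have hsf : Squarefree (∏ q ∈ Q, q) := squarefree_prod_primes hQ
    have hns : ¬ IsSquare (∏ q ∈ Q, q) := by
      rintro ⟨k, hk⟩
      have hu : IsUnit k := hsf k (by rw [hk])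
      obtain ⟨q, hq⟩ := hne
      have h2 : 2 ≤ ∏ q ∈ Q, q := by
        calc 2 ≤ q := (hQ q hq).two_le
        _ ≤ ∏ q ∈ Q, q := Finset.single_le_prod' (fun i hi => (hQ i hi).one_lt.le.trans' (by norm_num)) hq
      have hk1 : k = 1 := Nat.isUnit_iff.mp hu
      rw [hk1] at hk
      omega
    have hirr : Irrational (Real.sqrt (∏ q ∈ Q, (q : ℝ))) := by
      rw [hcast]
      exact irrational_sqrt_natCast_iff.mpr hns
    have : KF ∅ = ⊥ := by
      simp [KF, IntermediateField.adjoin_empty]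
    rw [this] at hmem
    rw [IntermediateField.mem_bot] at hmem
    obtain ⟨y, hy⟩ := hmem
    exact hirr ⟨y, hy⟩
  | @insert p P hpP ih =>
    intro Q hQ hdisj hne hmem
    have hpp : p.Prime := hP p (Finset.mem_insert_self p P)
    have hPp : ∀ r ∈ P, r.Prime := fun r hr => hP r (Finset.mem_insert_of_mem hr)
    have ihP := ih hPp
    have hsp : Real.sqrt p ∉ KF P := by
      have := ihP {p} (by simpa using hpp) (by simpa using fun h => hpP h) ⟨p, Finset.mem_singleton_self p⟩
      simpa using this
    -- representation: every element of KF (insert p P) is a + b √p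
    have hrep : ∀ x ∈ KF (insert p P), ∃ a ∈ KF P, ∃ b ∈ KF P, x = a + b * Real.sqrt p := by
      intro x hx
      have himg : ((fun p : ℕ => Real.sqrt p) '' (insert p P : Finset ℕ)) =
          insert (Real.sqrt p) ((fun p : ℕ => Real.sqrt p) '' (P : Finset ℕ)) := by
        simp [Finset.coe_insert, Set.image_insert_eq]
      have hx' : x ∈ IntermediateField.adjoin ℚ
          (insert (Real.sqrt p) ((fun p : ℕ => Real.sqrt p) '' (P : Finset ℕ))) := by
        rw [KF, himg] at hx; exact hx
      clear hx
      induction hx' using IntermediateField.adjoin_induction with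
      | mem y hy =>
        rcases hy with hy | hy
        · exact ⟨0, zero_mem _, 1, one_mem _, by rw [hy]; ring⟩
        · exact ⟨y, IntermediateField.subset_adjoin ℚ _ hy, 0, zero_mem _, by ring⟩
      | algebraMap q =>
        exact ⟨(q : ℝ), ratCast_mem_KF P q, 0, zero_mem _, by
          rw [eq_ratCast (algebraMap ℚ ℝ) q]; ring⟩
      | add y z hy hz hay haz =>
        obtain ⟨a, ha, b, hb, rfl⟩ := hay
        obtain ⟨c, hc, d, hd, rfl⟩ := haz
        exact ⟨a + c, add_mem ha hc, b + d, add_mem hb hd, by ring⟩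
      | mul y z hy hz hay haz =>
        obtain ⟨a, ha, b, hb, rfl⟩ := hay
        obtain ⟨c, hc, d, hd, rfl⟩ := haz
        have hpP' : (p : ℝ) ∈ KF P := by
          have : ((p : ℚ) : ℝ) = (p : ℝ) := by push_cast; ring
          rw [← this]; exact ratCast_mem_KF P _
        refine ⟨a * c + b * d * p, by
          exact add_mem (mul_mem ha hc) (mul_mem (mul_mem hb hd) hpP'),
          a * d + b * c, add_mem (mul_mem ha hd) (mul_mem hb hc), ?_⟩
        have hsq : Real.sqrt p * Real.sqrt p = (p : ℝ) :=
          Real.mul_self_sqrt (by positivity)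
        linear_combination b * d * hsq
      | inv y hy hay =>
        obtain ⟨a, ha, b, hb, rfl⟩ := hay
        by_cases hy0 : a + b * Real.sqrt p = 0
        · exact ⟨0, zero_mem _, 0, zero_mem _, by rw [hy0]; simp⟩
        · have hsq : Real.sqrt p * Real.sqrt p = (p : ℝ) :=
            Real.mul_self_sqrt (by positivity)
          have hpP' : (p : ℝ) ∈ KF P := by
            have : ((p : ℚ) : ℝ) = (p : ℝ) := by push_cast; ring
            rw [← this]; exact ratCast_mem_KF P _
          have hD : a ^ 2 - (p : ℝ) * b ^ 2 ≠ 0 := by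
            intro hD0
            by_cases hb0 : b = 0
            · apply hy0; subst hb0; simp at hD0 ⊢; nlinarith
            · apply hsp
              have habs : Real.sqrt p = |a / b| := by
                rw [← Real.sqrt_sq_eq_abs]
                congr 1
                field_simp
                linarith
              rcases abs_choice (a / b) with h | h
              · rw [habs, h]; exact div_mem ha hb
              · rw [habs, h]; exact neg_mem (div_mem ha hb)
          have hprod : (a + b * Real.sqrt p) * (a - b * Real.sqrt p)
              = a ^ 2 - (p : ℝ) * b ^ 2 := by
            linear_combination (-(b^2)) * hsq
          have hmul : (a + b * Real.sqrt p) * ((a - b * Real.sqrt p) / (a ^ 2 - (p:ℝ) * b ^ 2)) = 1 := by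
            rw [mul_div_assoc', hprod, div_self hD]
          have key : (a + b * Real.sqrt p)⁻¹ =
              a / (a ^ 2 - p * b ^ 2) + (-b / (a ^ 2 - p * b ^ 2)) * Real.sqrt p := by
            rw [inv_eq_of_mul_eq_one_right hmul]; ring
          refine ⟨a / (a ^ 2 - p * b ^ 2), ?_, -b / (a ^ 2 - p * b ^ 2), ?_, key⟩
          · exact div_mem ha (sub_mem (pow_mem ha 2) (mul_mem hpP' (pow_mem hb 2)))
          · exact div_mem (neg_mem hb) (sub_mem (pow_mem ha 2) (mul_mem hpP' (pow_mem hb 2)))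
    obtain ⟨a, ha, b, hb, heq⟩ := hrep _ hmem
    have hdisjP : Disjoint P Q := by
      exact Finset.disjoint_of_subset_left (Finset.subset_insert p P) hdisj
    have hpQ : p ∉ Q := by
      have := Finset.disjoint_left.mp hdisj (Finset.mem_insert_self p P)
      exact this
    have hQpos : (0:ℝ) < ∏ q ∈ Q, (q:ℝ) := by
      refine Finset.prod_pos fun q hq => by exact_mod_cast (hQ q hq).pos
    have hsq : Real.sqrt p * Real.sqrt p = (p : ℝ) := Real.mul_self_sqrt (by positivity)
    have hsqQ : Real.sqrt (∏ q ∈ Q, (q:ℝ)) * Real.sqrt (∏ q ∈ Q, (q:ℝ)) = ∏ q ∈ Q, (q:ℝ) :=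
      Real.mul_self_sqrt hQpos.le
    by_cases hb0 : b = 0
    · exact ihP Q hQ hdisjP hne (by rw [heq, hb0]; simpa using ha)
    by_cases ha0 : a = 0
    · -- √(∏Q) = b √p ; multiply by √p : √(p ∏ Q) = b p ∈ KF P
      refine ihP (insert p Q) (by
          intro q hq; rcases Finset.mem_insert.mp hq with rfl | hq
          · exact hpp
          · exact hQ q hq)
        (by
          rw [Finset.disjoint_insert_right]
          exact ⟨fun h => hpP h, hdisjP⟩)
        ⟨p, Finset.mem_insert_self p Q⟩ ?_
      have hval : Real.sqrt (∏ q ∈ insert p Q, (q:ℝ)) = b * (p:ℝ) := by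
        rw [Finset.prod_insert hpQ, Real.sqrt_mul (by positivity)]
        rw [heq, ha0, zero_add]
        linear_combination b * hsq
      rw [hval]
      have hpP' : (p : ℝ) ∈ KF P := by
        have : ((p : ℚ) : ℝ) = (p : ℝ) := by push_cast; ring
        rw [← this]; exact ratCast_mem_KF P _
      exact mul_mem hb hpP'
    · -- both nonzero : √p ∈ KF P
      apply hsp
      have h2ab : (2:ℝ) * a * b ≠ 0 := by
        intro h; rcases mul_eq_zero.mp h with h | h
        · rcases mul_eq_zero.mp h with h | h
          · norm_num at h
          · exact ha0 h
        · exact hb0 h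
      have key : Real.sqrt p = ((∏ q ∈ Q, (q:ℝ)) - a^2 - (p:ℝ) * b^2) / (2 * a * b) := by
        rw [eq_div_iff h2ab]
        have h1 : (a + b * Real.sqrt p) * (a + b * Real.sqrt p) = ∏ q ∈ Q, (q:ℝ) := by
          rw [← heq]; exact hsqQ
        linear_combination h1 - (b^2) * hsq
      rw [key]
      have hpP' : (p : ℝ) ∈ KF P := by
        have : ((p : ℚ) : ℝ) = (p : ℝ) := by push_cast; ring
        rw [← this]; exact ratCast_mem_KF P _
      have hQmem : (∏ q ∈ Q, (q:ℝ)) ∈ KF P := by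
        refine prod_mem fun q hq => ?_
        have : ((q : ℚ) : ℝ) = (q : ℝ) := by push_cast; ring
        rw [← this]; exact ratCast_mem_KF P _
      exact div_mem (sub_mem (sub_mem hQmem (pow_mem ha 2)) (mul_mem hpP' (pow_mem hb 2)))
        (mul_mem (mul_mem (ratCast_mem_KF P 2) ha) hb)

lemma li_powerset (P : Finset ℕ) (hP : ∀ p ∈ P, p.Prime) (a : Finset ℕ → ℚ)
    (h : ∑ T ∈ P.powerset, (a T : ℝ) * Real.sqrt (∏ t ∈ T, (t : ℝ)) = 0) :
    ∀ T ∈ P.powerset, a T = 0 := by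
  induction P using Finset.induction_on generalizing a with
  | empty =>
    intro T hT
    simp only [Finset.powerset_empty, Finset.mem_singleton] at hT
    subst hT
    simpa using h
  | @insert p P hpP ih =>
    have hpp : Nat.Prime p := hP p (Finset.mem_insert_self p P)
    have hPp : ∀ r ∈ P, r.Prime := fun r hr => hP r (Finset.mem_insert_of_mem hr)
    have hsp : Real.sqrt p ∉ KF P := by
      have := sqrt_prod_not_mem P hPp {p} (by simpa using hpp)
        (by simp [Finset.disjoint_singleton_right, hpP]) ⟨p, Finset.mem_singleton_self p⟩
      simpa using this
    -- split the sum
    have hdisj : Disjoint P.powerset (P.powerset.image (insert p)) := by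
      rw [Finset.disjoint_right]
      rintro T hT hT'
      obtain ⟨S, _, rfl⟩ := Finset.mem_image.mp hT
      exact hpP (Finset.mem_powerset.mp hT' (Finset.mem_insert_self p S))
    have hinj2 : ∀ S ∈ P.powerset, ∀ S' ∈ P.powerset, insert p S = insert p S' → S = S' := by
      intro S hS S' hS' hSS
      have hpS : p ∉ S := fun h => hpP (Finset.mem_powerset.mp hS h)
      have hpS' : p ∉ S' := fun h => hpP (Finset.mem_powerset.mp hS' h)
      have := congrArg (Finset.erase · p) hSS
      simpa [Finset.erase_insert hpS, Finset.erase_insert hpS'] using this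
    rw [Finset.powerset_insert, Finset.sum_union hdisj, Finset.sum_image hinj2] at h
    have hterm : ∀ S ∈ P.powerset,
        (a (insert p S) : ℝ) * Real.sqrt (∏ t ∈ insert p S, (t : ℝ))
        = ((a (insert p S) : ℝ) * Real.sqrt (∏ t ∈ S, (t : ℝ))) * Real.sqrt p := by
      intro S hS
      have hpS : p ∉ S := fun h => hpP (Finset.mem_powerset.mp hS h)
      rw [Finset.prod_insert hpS, Real.sqrt_mul (by positivity)]
      ring
    rw [Finset.sum_congr rfl hterm, ← Finset.sum_mul] at h
    set A := ∑ T ∈ P.powerset, (a T : ℝ) * Real.sqrt (∏ t ∈ T, (t : ℝ)) with hA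
    set B := ∑ S ∈ P.powerset, (a (insert p S) : ℝ) * Real.sqrt (∏ t ∈ S, (t : ℝ)) with hB
    have hAmem : A ∈ KF P := by
      refine sum_mem fun T hT => mul_mem (ratCast_mem_KF P _)
        (sqrt_prod_mem (Finset.mem_powerset.mp hT))
    have hBmem : B ∈ KF P := by
      refine sum_mem fun T hT => mul_mem (ratCast_mem_KF P _)
        (sqrt_prod_mem (Finset.mem_powerset.mp hT))
    have hB0 : B = 0 := by
      by_contra hB0
      apply hsp
      have : Real.sqrt p = -A / B := by
        field_simp
        linarith [h]
      rw [this]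
      exact div_mem (neg_mem hAmem) hBmem
    have hA0 : A = 0 := by rw [hB0] at h; simpa using h
    have h1 := ih hPp a hA0
    have h2 := ih hPp (fun S => a (insert p S)) hB0
    intro T hT
    rw [Finset.powerset_insert, Finset.mem_union] at hT
    rcases hT with hT | hT
    · exact h1 T hT
    · obtain ⟨S, hS, rfl⟩ := Finset.mem_image.mp hT
      exact h2 S hS

theorem ussr_stmt_3 (m : ℕ) (s : Fin m → ℕ) (hpos : ∀ i, 0 < s i)
    (hsq : ∀ i, Squarefree (s i)) (hinj : Function.Injective s)
    (c : Fin m → ℤ) (hc : ¬ ∀ i, c i = 0) :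
    ∑ i, (c i : ℝ) * Real.sqrt (s i) ≠ 0 := by
  intro h0
  push_neg at hc
  obtain ⟨i₀, hi₀⟩ := hc
  set P : Finset ℕ := Finset.univ.biUnion (fun i => (s i).primeFactors) with hP
  have hPprime : ∀ p ∈ P, p.Prime := by
    intro p hp
    obtain ⟨i, _, hp⟩ := Finset.mem_biUnion.mp hp
    exact Nat.prime_of_mem_primeFactors hp
  -- the fiber map
  have hmap : ∀ i : Fin m, (s i).primeFactors ∈ P.powerset := by
    intro i
    rw [Finset.mem_powerset]
    intro q hq
    exact Finset.mem_biUnion.mpr ⟨i, Finset.mem_univ i, hq⟩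
  have hfinj : Function.Injective (fun i : Fin m => (s i).primeFactors) := by
    intro i j hij
    apply hinj
    have hi := Nat.prod_primeFactors_of_squarefree (hsq i)
    have hj := Nat.prod_primeFactors_of_squarefree (hsq j)
    rw [← hi, ← hj]
    simp only at hij
    rw [hij]
  classical
  set a : Finset ℕ → ℚ := fun T => ∑ i ∈ Finset.univ.filter (fun i => (s i).primeFactors = T), (c i : ℚ) with ha
  have hsum : ∑ T ∈ P.powerset, (a T : ℝ) * Real.sqrt (∏ t ∈ T, (t : ℝ)) = 0 := by
    have hfib := Finset.sum_fiberwise_of_maps_to (s := Finset.univ) (t := P.powerset)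
      (g := fun i : Fin m => (s i).primeFactors) (fun i _ => hmap i)
      (fun i => (c i : ℝ) * Real.sqrt (s i))
    rw [← h0, ← hfib]
    refine Finset.sum_congr rfl fun T hT => ?_
    rw [ha]
    push_cast
    rw [Finset.sum_mul]
    refine Finset.sum_congr rfl fun i hi => ?_
    have hiT : (s i).primeFactors = T := (Finset.mem_filter.mp hi).2
    congr 1
    rw [← hiT]
    have : (∏ t ∈ (s i).primeFactors, (t : ℝ)) = ((s i : ℕ) : ℝ) := by
      rw [← Nat.cast_prod, Nat.prod_primeFactors_of_squarefree (hsq i)]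
    rw [this]
  have hz : ∑ i ∈ Finset.univ.filter (fun i => (s i).primeFactors = (s i₀).primeFactors), (c i : ℚ) = 0 :=
    li_powerset P hPprime a hsum ((s i₀).primeFactors) (hmap i₀)
  have hfilter : Finset.univ.filter (fun i => (s i).primeFactors = (s i₀).primeFactors) = {i₀} := by
    ext j
    simp only [Finset.mem_filter, Finset.mem_univ, true_and, Finset.mem_singleton]
    exact ⟨fun h => hfinj h, fun h => by rw [h]⟩
  rw [hfilter, Finset.sum_singleton] at hz
  exact hi₀ (by exact_mod_cast hz)
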